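/- Let H be a weak Hopf algebra over a field k with quasitriangular structure (R, R̄), and let (Θ, Θ̄) be a twist for H with twisted comultiplication Δ_Θ(h) = Θ̄Δ(h)Θ. Then (R_Θ, R̄_Θ) := (Θ̄₂₁RΘ, Θ̄R̄Θ₂₁) is a quasitriangular structure on the twisted weak Hopf algebra H_Θ; explicitly: R_Θ = Δ_Θᵒᵖ(1)R_ΘΔ_Θ(1), R̄_Θ = Δ_Θ(1)R̄_ΘΔ_Θᵒᵖ(1), R_ΘR̄_Θ = Δ_Θᵒᵖ(1), R̄_ΘR_Θ = Δ_Θ(1), Δ_Θᵒᵖ(h)R_Θ = R_ΘΔ_Θ(h) for all h ∈ H, (id⊗Δ_Θ)R_Θ = (R_Θ)₁₃(R_Θ)₁₂, and (Δ_Θ⊗id)R_Θ = (R_Θ)₁₃(R_Θ)₂₃. -/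

import Mathlib

open TensorProduct

noncomputable section

namespace WHA

variable (k B : Type*) [Field k] [Ring B] [Algebra k B]

/-- `x ↦ x ⊗ 1`, the embedding of `B ⊗ B` into legs 1,2 of `B ⊗ B ⊗ B`. -/
def leg12 : B ⊗[k] B →ₗ[k] B ⊗[k] (B ⊗[k] B) :=
  (TensorProduct.assoc k B B B).toLinearMap ∘ₗ (TensorProduct.mk k (B ⊗[k] B) B).flip 1

/-- `x ↦ 1 ⊗ x`, the embedding of `B ⊗ B` into legs 2,3 of `B ⊗ B ⊗ B`. -/
def leg23 : B ⊗[k] B →ₗ[k] B ⊗[k] (B ⊗[k] B) :=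
  TensorProduct.mk k B (B ⊗[k] B) 1

/-- `a ⊗ b ↦ a ⊗ 1 ⊗ b`, the embedding of `B ⊗ B` into legs 1,3 of `B ⊗ B ⊗ B`. -/
def leg13 : B ⊗[k] B →ₗ[k] B ⊗[k] (B ⊗[k] B) :=
  TensorProduct.map LinearMap.id (TensorProduct.mk k B B 1)

/-- `Δ ⊗ id`, landing in the right-associated triple tensor product. -/
def ext12 (Δ : B →ₗ[k] B ⊗[k] B) : B ⊗[k] B →ₗ[k] B ⊗[k] (B ⊗[k] B) :=
  (TensorProduct.assoc k B B B).toLinearMap ∘ₗ TensorProduct.map Δ LinearMap.id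

/-- `id ⊗ Δ`. -/
def ext23 (Δ : B →ₗ[k] B ⊗[k] B) : B ⊗[k] B →ₗ[k] B ⊗[k] (B ⊗[k] B) :=
  TensorProduct.map LinearMap.id Δ

/-- `(ε ⊗ id)` composed with the canonical isomorphism `k ⊗ B ≅ B`. -/
def epsL (ε : B →ₗ[k] k) : B ⊗[k] B →ₗ[k] B :=
  (TensorProduct.lid k B).toLinearMap ∘ₗ TensorProduct.map ε LinearMap.id

/-- `(id ⊗ ε)` composed with the canonical isomorphism `B ⊗ k ≅ B`. -/
def epsR (ε : B →ₗ[k] k) : B ⊗[k] B →ₗ[k] B :=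
  (TensorProduct.rid k B).toLinearMap ∘ₗ TensorProduct.map LinearMap.id ε

/-- Pairing of two linear functionals against an element of `B ⊗ B`. -/
def pairF (φ ψ : B →ₗ[k] k) : B ⊗[k] B →ₗ[k] k :=
  (TensorProduct.lid k k).toLinearMap ∘ₗ TensorProduct.map φ ψ

/-- The multiplication map `B ⊗ B → B`. -/
def mul2 : B ⊗[k] B →ₗ[k] B := LinearMap.mul' k B

/-- A weak Hopf algebra structure on the `k`-algebra `B`. -/
structure WeakHopf where
  Δ : B →ₗ[k] B ⊗[k] B
  ε : B →ₗ[k] k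
  S : B →ₗ[k] B
  comul_mul : ∀ g h : B, Δ (g * h) = Δ g * Δ h
  coassoc : ∀ h : B, ext12 k B Δ (Δ h) = ext23 k B Δ (Δ h)
  counit_left : ∀ h : B, epsL k B ε (Δ h) = h
  counit_right : ∀ h : B, epsR k B ε (Δ h) = h
  eps_weak₁ : ∀ g h f : B, ε (g * h * f) =
    pairF k B (ε ∘ₗ LinearMap.mulLeft k g) (ε ∘ₗ LinearMap.mulRight k f) (Δ h)
  eps_weak₂ : ∀ g h f : B, ε (g * h * f) =
    pairF k B (ε ∘ₗ LinearMap.mulRight k f) (ε ∘ₗ LinearMap.mulLeft k g) (Δ h)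
  delta_one₁ : ext12 k B Δ (Δ 1) = leg12 k B (Δ 1) * leg23 k B (Δ 1)
  delta_one₂ : ext12 k B Δ (Δ 1) = leg23 k B (Δ 1) * leg12 k B (Δ 1)
  antipode₁ : ∀ h : B,
    mul2 k B (TensorProduct.map LinearMap.id S (Δ h)) = epsL k B ε (Δ 1 * (h ⊗ₜ[k] 1))
  antipode₂ : ∀ h : B,
    mul2 k B (TensorProduct.map S LinearMap.id (Δ h)) = epsR k B ε (((1 : B) ⊗ₜ[k] h) * Δ 1)
  antipode₃ : ∀ h : B,
    mul2 k B (TensorProduct.map S (mul2 k B ∘ₗ TensorProduct.map LinearMap.id S)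
      (ext23 k B Δ (Δ h))) = S h

variable {k B}

/-- The target counital map `ε_t`. -/
def WeakHopf.εt (W : WeakHopf k B) : B →ₗ[k] B :=
  epsL k B W.ε ∘ₗ LinearMap.mulLeft k (W.Δ 1) ∘ₗ (TensorProduct.mk k B B).flip 1

/-- The source counital map `ε_s`. -/
def WeakHopf.εs (W : WeakHopf k B) : B →ₗ[k] B :=
  epsR k B W.ε ∘ₗ LinearMap.mulRight k (W.Δ 1) ∘ₗ TensorProduct.mk k B B 1

variable (k B)

/-- A twist for a weak Hopf algebra. -/
structure Twist (W : WeakHopf k B) where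
  Θ : B ⊗[k] B
  Θbar : B ⊗[k] B
  idem_left : Θ = W.Δ 1 * Θ
  idem_right : Θbar = Θbar * W.Δ 1
  prod_eq : Θ * Θbar = W.Δ 1
  counit₁ : epsL k B W.ε Θ = 1
  counit₂ : epsR k B W.ε Θ = 1
  counit₃ : epsL k B W.ε Θbar = 1
  counit₄ : epsR k B W.ε Θbar = 1
  cocycle₁ : ext12 k B W.Δ Θ * leg12 k B Θ = ext23 k B W.Δ Θ * leg23 k B Θ
  cocycle₂ : leg12 k B Θbar * ext12 k B W.Δ Θbar = leg23 k B Θbar * ext23 k B W.Δ Θbar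
  cocycle₃ : ext12 k B W.Δ Θbar * ext23 k B W.Δ Θ = leg12 k B Θ * leg23 k B Θbar
  cocycle₄ : ext23 k B W.Δ Θbar * ext12 k B W.Δ Θ = leg23 k B Θ * leg12 k B Θbar

end WHA

section Aux

variable {k B : Type*} [Field k] [Ring B] [Algebra k B]

/-- Multiplicativity criterion for a linear map out of a tensor product of algebras. -/
theorem WHA.mulLaw {A₁ A₂ C : Type*} [Ring A₁] [Ring A₂] [Ring C]
    [Algebra k A₁] [Algebra k A₂] [Algebra k C]
    (L : A₁ ⊗[k] A₂ →ₗ[k] C)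
    (h : ∀ a b a' b', L ((a * a') ⊗ₜ[k] (b * b')) = L (a ⊗ₜ[k] b) * L (a' ⊗ₜ[k] b'))
    (x y : A₁ ⊗[k] A₂) : L (x * y) = L x * L y := by
  induction x using TensorProduct.induction_on with
  | zero => simp
  | tmul a b =>
    induction y using TensorProduct.induction_on with
    | zero => simp
    | tmul a' b' => rw [Algebra.TensorProduct.tmul_mul_tmul]; exact h a b a' b'
    | add y₁ y₂ h₁ h₂ => rw [mul_add, map_add, h₁, h₂, map_add, mul_add]
  | add x₁ x₂ h₁ h₂ => rw [add_mul, map_add, h₁, h₂, map_add, add_mul]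

namespace WHA

/-- The flip of the two tensor factors, as a linear map. -/
def flipT : B ⊗[k] B →ₗ[k] B ⊗[k] B := (TensorProduct.comm k B B).toLinearMap

lemma flipT_apply (x : B ⊗[k] B) : flipT x = TensorProduct.comm k B B x := rfl

@[simp] lemma flipT_tmul (a b : B) : flipT (a ⊗ₜ[k] b) = b ⊗ₜ[k] a := rfl

lemma flipT_mul (x y : B ⊗[k] B) : flipT (x * y) = flipT x * flipT y := by
  refine mulLaw _ (fun a b a' b' => ?_) x y
  simp [Algebra.TensorProduct.tmul_mul_tmul]

/-- The swap of legs 2 and 3 of the triple tensor product. -/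
def sw23 : B ⊗[k] (B ⊗[k] B) →ₗ[k] B ⊗[k] (B ⊗[k] B) :=
  TensorProduct.map LinearMap.id (flipT (k := k) (B := B))

@[simp] lemma sw23_tmul (a : B) (m : B ⊗[k] B) : sw23 (a ⊗ₜ[k] m) = a ⊗ₜ[k] flipT m := by
  simp [sw23]

lemma sw23_mul (x y : B ⊗[k] (B ⊗[k] B)) : sw23 (x * y) = sw23 x * sw23 y := by
  refine mulLaw _ (fun a b a' b' => ?_) x y
  simp [Algebra.TensorProduct.tmul_mul_tmul, flipT_mul]

/-- The swap of legs 1 and 2 of the triple tensor product. -/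
def sw12 : B ⊗[k] (B ⊗[k] B) →ₗ[k] B ⊗[k] (B ⊗[k] B) :=
  (TensorProduct.assoc k B B B).toLinearMap
    ∘ₗ TensorProduct.map (flipT (k := k) (B := B)) LinearMap.id
    ∘ₗ (TensorProduct.assoc k B B B).symm.toLinearMap

@[simp] lemma sw12_tmul (a b c : B) :
    sw12 (a ⊗ₜ[k] (b ⊗ₜ[k] c)) = b ⊗ₜ[k] (a ⊗ₜ[k] c) := by
  simp [sw12]

lemma sw12_mul (x y : B ⊗[k] (B ⊗[k] B)) : sw12 (x * y) = sw12 x * sw12 y := by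
  refine mulLaw _ (fun a m a' m' => ?_) x y
  induction m using TensorProduct.induction_on with
  | zero => simp
  | tmul b c =>
    induction m' using TensorProduct.induction_on with
    | zero => simp
    | tmul b' c' =>
      rw [Algebra.TensorProduct.tmul_mul_tmul, sw12_tmul, sw12_tmul, sw12_tmul,
        Algebra.TensorProduct.tmul_mul_tmul, Algebra.TensorProduct.tmul_mul_tmul]
    | add m₁ m₂ h₁ h₂ => simp only [mul_add, tmul_add, map_add, h₁, h₂]
  | add m₁ m₂ h₁ h₂ => simp only [add_mul, tmul_add, map_add, h₁, h₂]

end WHA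
end Aux

section Aux2

variable {k B : Type*} [Field k] [Ring B] [Algebra k B]

namespace WHA

lemma leg12_def (X : B ⊗[k] B) :
    leg12 k B X = TensorProduct.assoc k B B B (X ⊗ₜ[k] 1) := rfl

lemma leg23_def (X : B ⊗[k] B) : leg23 k B X = (1 : B) ⊗ₜ[k] X := rfl

lemma leg13_tmul (a b : B) : leg13 k B (a ⊗ₜ[k] b) = a ⊗ₜ[k] ((1 : B) ⊗ₜ[k] b) := rfl

lemma ext12_tmul (Δ : B →ₗ[k] B ⊗[k] B) (a b : B) :
    ext12 k B Δ (a ⊗ₜ[k] b) = TensorProduct.assoc k B B B (Δ a ⊗ₜ[k] b) := rfl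

lemma ext23_tmul (Δ : B →ₗ[k] B ⊗[k] B) (a b : B) :
    ext23 k B Δ (a ⊗ₜ[k] b) = a ⊗ₜ[k] Δ b := rfl

@[simp] lemma assoc3_zero :
    (TensorProduct.assoc k B B B) (0 : (B ⊗[k] B) ⊗[k] B) = 0 := LinearEquiv.map_zero _

lemma assoc_tmul_mul (u v : B ⊗[k] B) (c d : B) :
    (TensorProduct.assoc k B B B) (u ⊗ₜ[k] c) * (TensorProduct.assoc k B B B) (v ⊗ₜ[k] d)
      = (TensorProduct.assoc k B B B) ((u * v) ⊗ₜ[k] (c * d)) := by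
  induction u using TensorProduct.induction_on with
  | zero => simp
  | tmul a b =>
    induction v using TensorProduct.induction_on with
    | zero => simp
    | tmul a' b' => simp [Algebra.TensorProduct.tmul_mul_tmul]
    | add v₁ v₂ h₁ h₂ => simp only [add_tmul, mul_add, map_add, h₁, h₂]
  | add u₁ u₂ h₁ h₂ => simp only [add_tmul, add_mul, map_add, h₁, h₂]

lemma leg12_mul (x y : B ⊗[k] B) :
    leg12 k B (x * y) = leg12 k B x * leg12 k B y := by
  rw [leg12_def, leg12_def, leg12_def, assoc_tmul_mul, one_mul]

lemma leg23_mul (x y : B ⊗[k] B) :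
    leg23 k B (x * y) = leg23 k B x * leg23 k B y := by
  rw [leg23_def, leg23_def, leg23_def, Algebra.TensorProduct.tmul_mul_tmul, one_mul]

lemma leg13_mul (x y : B ⊗[k] B) :
    leg13 k B (x * y) = leg13 k B x * leg13 k B y := by
  refine mulLaw _ (fun a b a' b' => ?_) x y
  simp [leg13_tmul, Algebra.TensorProduct.tmul_mul_tmul]

lemma ext12_mul (Δ : B →ₗ[k] B ⊗[k] B) (hΔ : ∀ g h : B, Δ (g * h) = Δ g * Δ h)
    (x y : B ⊗[k] B) : ext12 k B Δ (x * y) = ext12 k B Δ x * ext12 k B Δ y := by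
  refine mulLaw _ (fun a b a' b' => ?_) x y
  rw [ext12_tmul, ext12_tmul, ext12_tmul, assoc_tmul_mul, hΔ]

lemma ext23_mul (Δ : B →ₗ[k] B ⊗[k] B) (hΔ : ∀ g h : B, Δ (g * h) = Δ g * Δ h)
    (x y : B ⊗[k] B) : ext23 k B Δ (x * y) = ext23 k B Δ x * ext23 k B Δ y := by
  refine mulLaw _ (fun a b a' b' => ?_) x y
  rw [ext23_tmul, ext23_tmul, ext23_tmul, Algebra.TensorProduct.tmul_mul_tmul, hΔ]

lemma sw12_assoc (u : B ⊗[k] B) (c : B) :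
    sw12 (TensorProduct.assoc k B B B (u ⊗ₜ[k] c))
      = TensorProduct.assoc k B B B (flipT u ⊗ₜ[k] c) := by
  induction u using TensorProduct.induction_on with
  | zero => simp
  | tmul a b => simp
  | add u₁ u₂ h₁ h₂ => simp only [add_tmul, map_add, h₁, h₂]

lemma sw1223_assoc (u : B ⊗[k] B) (c : B) :
    sw12 (sw23 (TensorProduct.assoc k B B B (u ⊗ₜ[k] c))) = c ⊗ₜ[k] u := by
  induction u using TensorProduct.induction_on with
  | zero => simp
  | tmul a b => simp
  | add u₁ u₂ h₁ h₂ => simp only [add_tmul, map_add, h₁, h₂, tmul_add]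

lemma sw2312_tmul (a : B) (m : B ⊗[k] B) :
    sw23 (sw12 (a ⊗ₜ[k] m)) = TensorProduct.assoc k B B B (m ⊗ₜ[k] a) := by
  induction m using TensorProduct.induction_on with
  | zero => simp
  | tmul b c => simp
  | add m₁ m₂ h₁ h₂ => simp only [add_tmul, map_add, h₁, h₂, tmul_add]

lemma T1 (X : B ⊗[k] B) : sw12 (sw23 (leg12 k B X)) = leg23 k B X := by
  induction X using TensorProduct.induction_on with
  | zero => simp
  | tmul a b => simp [leg12_def, leg23_def]
  | add X₁ X₂ h₁ h₂ => simp only [map_add, h₁, h₂]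

lemma T2 (Δ : B →ₗ[k] B ⊗[k] B) (X : B ⊗[k] B) :
    sw12 (sw23 (ext12 k B Δ X)) = ext23 k B Δ (flipT X) := by
  induction X using TensorProduct.induction_on with
  | zero => simp
  | tmul a b => rw [ext12_tmul, sw1223_assoc, flipT_tmul, ext23_tmul]
  | add X₁ X₂ h₁ h₂ => simp only [map_add, h₁, h₂]

lemma T3 (X : B ⊗[k] B) : sw12 (sw23 (leg23 k B X)) = leg13 k B (flipT X) := by
  induction X using TensorProduct.induction_on with
  | zero => simp
  | tmul a b => simp [leg23_def, leg13_tmul]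
  | add X₁ X₂ h₁ h₂ => simp only [map_add, h₁, h₂]

lemma T4 (Δ : B →ₗ[k] B ⊗[k] B) (X : B ⊗[k] B) :
    sw23 (ext23 k B Δ X) = ext23 k B (flipT ∘ₗ Δ) X := by
  induction X using TensorProduct.induction_on with
  | zero => simp
  | tmul a b => rw [ext23_tmul, sw23_tmul, ext23_tmul]; rfl
  | add X₁ X₂ h₁ h₂ => simp only [map_add, h₁, h₂]

lemma T5 (X : B ⊗[k] B) : sw12 (leg23 k B X) = leg13 k B X := by
  induction X using TensorProduct.induction_on with
  | zero => simp
  | tmul a b => simp [leg23_def, leg13_tmul]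
  | add X₁ X₂ h₁ h₂ => simp only [map_add, h₁, h₂]

lemma T6 (Δ : B →ₗ[k] B ⊗[k] B) (X : B ⊗[k] B) :
    sw12 (ext12 k B Δ X) = ext12 k B (flipT ∘ₗ Δ) X := by
  induction X using TensorProduct.induction_on with
  | zero => simp
  | tmul a b => rw [ext12_tmul, sw12_assoc, ext12_tmul]; rfl
  | add X₁ X₂ h₁ h₂ => simp only [map_add, h₁, h₂]

lemma T7 (X : B ⊗[k] B) : sw12 (leg12 k B X) = leg12 k B (flipT X) := by
  rw [leg12_def, sw12_assoc, leg12_def]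

lemma T8 (X : B ⊗[k] B) : sw23 (leg12 k B X) = leg13 k B X := by
  induction X using TensorProduct.induction_on with
  | zero => simp
  | tmul a b => simp [leg12_def, leg13_tmul]
  | add X₁ X₂ h₁ h₂ => simp only [map_add, h₁, h₂]

lemma T9 (X : B ⊗[k] B) : sw23 (leg13 k B X) = leg12 k B X := by
  induction X using TensorProduct.induction_on with
  | zero => simp
  | tmul a b => simp [leg12_def, leg13_tmul]
  | add X₁ X₂ h₁ h₂ => simp only [map_add, h₁, h₂]

lemma T10 (X : B ⊗[k] B) : sw23 (leg23 k B X) = leg23 k B (flipT X) := by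
  rw [leg23_def, sw23_tmul, leg23_def]

lemma U4 (Δ : B →ₗ[k] B ⊗[k] B) (X : B ⊗[k] B) :
    sw23 (sw12 (ext23 k B Δ X)) = ext12 k B Δ (flipT X) := by
  induction X using TensorProduct.induction_on with
  | zero => simp
  | tmul a b => rw [ext23_tmul, sw2312_tmul, flipT_tmul, ext12_tmul]
  | add X₁ X₂ h₁ h₂ => simp only [map_add, h₁, h₂]

end WHA
end Aux2

section Aux3
variable {M : Type*} [Semigroup M]

lemma WHA.mul_mul_lift {x y u v : M} (h : x * y = u * v) (z : M) :
    x * (y * z) = u * (v * z) := by rw [← mul_assoc, h, mul_assoc]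

lemma WHA.mul_mul_lift' {x y w : M} (h : x * y = w) (z : M) :
    x * (y * z) = w * z := by rw [← mul_assoc, h]

lemma WHA.sandwich_right {r p q : M} (hq : q * q = q) (h : r = p * r * q) :
    r * q = r := by rw [h, mul_assoc (p * r) q q, hq]

lemma WHA.sandwich_left {r p q : M} (hp : p * p = p) (h : r = p * r * q) :
    p * r = r := by rw [h, ← mul_assoc p (p * r) q, ← mul_assoc p p r, hp]

end Aux3

set_option maxHeartbeats 1000000 in
/-- twisting a quasitriangular weak Hopf algebra gives a quasitriangular
weak Hopf algebra, with quasitriangular structure `(Θ̄₂₁ R Θ, Θ̄ R̄ Θ₂₁)`. -/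
theorem twisted_quasitriangular
    (k B : Type*) [Field k] [Ring B] [Algebra k B]
    (W : WHA.WeakHopf k B) (T : WHA.Twist k B W)
    (R Rbar : B ⊗[k] B)
    (hR₁ : R = (TensorProduct.comm k B B) (W.Δ 1) * R * W.Δ 1)
    (hR₂ : Rbar = W.Δ 1 * Rbar * (TensorProduct.comm k B B) (W.Δ 1))
    (hR₃ : R * Rbar = (TensorProduct.comm k B B) (W.Δ 1))
    (hR₄ : Rbar * R = W.Δ 1)
    (hR₅ : ∀ h : B, (TensorProduct.comm k B B) (W.Δ h) * R = R * W.Δ h)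
    (hR₆ : WHA.ext23 k B W.Δ R = WHA.leg13 k B R * WHA.leg12 k B R)
    (hR₇ : WHA.ext12 k B W.Δ R = WHA.leg13 k B R * WHA.leg23 k B R)
    (ΔΘ : B →ₗ[k] B ⊗[k] B)
    (hΔΘ : ∀ h : B, ΔΘ h = T.Θbar * W.Δ h * T.Θ)
    (RΘ RbΘ : B ⊗[k] B)
    (hRΘ : RΘ = (TensorProduct.comm k B B) T.Θbar * R * T.Θ)
    (hRbΘ : RbΘ = T.Θbar * Rbar * (TensorProduct.comm k B B) T.Θ) :
    RΘ = (TensorProduct.comm k B B) (ΔΘ 1) * RΘ * ΔΘ 1 ∧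
    RbΘ = ΔΘ 1 * RbΘ * (TensorProduct.comm k B B) (ΔΘ 1) ∧
    RΘ * RbΘ = (TensorProduct.comm k B B) (ΔΘ 1) ∧
    RbΘ * RΘ = ΔΘ 1 ∧
    (∀ h : B, (TensorProduct.comm k B B) (ΔΘ h) * RΘ = RΘ * ΔΘ h) ∧
    WHA.ext23 k B ΔΘ RΘ = WHA.leg13 k B RΘ * WHA.leg12 k B RΘ ∧
    WHA.ext12 k B ΔΘ RΘ = WHA.leg13 k B RΘ * WHA.leg23 k B RΘ := by
  -- pass to the `flipT` form of the hypotheses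
  have fmul : ∀ x y : B ⊗[k] B, WHA.flipT (x * y) = WHA.flipT x * WHA.flipT y :=
    WHA.flipT_mul
  have hR1 : R = WHA.flipT (W.Δ 1) * R * W.Δ 1 := hR₁
  have hR2 : Rbar = W.Δ 1 * Rbar * WHA.flipT (W.Δ 1) := hR₂
  have hR3 : R * Rbar = WHA.flipT (W.Δ 1) := hR₃
  have hR5 : ∀ h : B, WHA.flipT (W.Δ h) * R = R * W.Δ h := hR₅
  have hRΘ' : RΘ = WHA.flipT T.Θbar * R * T.Θ := hRΘ
  have hRbΘ' : RbΘ = T.Θbar * Rbar * WHA.flipT T.Θ := hRbΘ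
  -- basic idempotent facts
  have hΔe : ∀ h : B, W.Δ h * W.Δ 1 = W.Δ h := fun h => by rw [← W.comul_mul, mul_one]
  have heΔ : ∀ h : B, W.Δ 1 * W.Δ h = W.Δ h := fun h => by rw [← W.comul_mul, one_mul]
  have hfe : WHA.flipT (W.Δ 1) * WHA.flipT (W.Δ 1) = WHA.flipT (W.Δ 1) := by
    rw [← fmul, hΔe 1]
  have heR : WHA.flipT (W.Δ 1) * R = R := WHA.sandwich_left hfe hR1
  have hRe : R * W.Δ 1 = R := WHA.sandwich_right (hΔe 1) hR1
  have heRb : W.Δ 1 * Rbar = Rbar := WHA.sandwich_left (hΔe 1) hR2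
  have hfee : WHA.flipT T.Θ * WHA.flipT T.Θbar = WHA.flipT (W.Δ 1) := by
    rw [← fmul, T.prod_eq]
  have hk : WHA.flipT (W.Δ 1) * WHA.flipT T.Θ = WHA.flipT T.Θ := by
    rw [← fmul, ← T.idem_left]
  have hΔΘ1 : ΔΘ 1 = T.Θbar * T.Θ := by rw [hΔΘ 1, mul_assoc, ← T.idem_left]
  -- conjugation formulas for the twisted comultiplication
  have C1 : ∀ x : B ⊗[k] B, WHA.ext23 k B ΔΘ x
      = WHA.leg23 k B T.Θbar * WHA.ext23 k B W.Δ x * WHA.leg23 k B T.Θ := by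
    intro x
    induction x using TensorProduct.induction_on with
    | zero => simp
    | tmul a b =>
      rw [WHA.ext23_tmul, WHA.ext23_tmul, hΔΘ b, WHA.leg23_def, WHA.leg23_def,
        Algebra.TensorProduct.tmul_mul_tmul, Algebra.TensorProduct.tmul_mul_tmul,
        one_mul, mul_one]
    | add x₁ x₂ h₁ h₂ => rw [map_add, map_add, h₁, h₂, mul_add, add_mul]
  have C2 : ∀ x : B ⊗[k] B, WHA.ext12 k B ΔΘ x
      = WHA.leg12 k B T.Θbar * WHA.ext12 k B W.Δ x * WHA.leg12 k B T.Θ := by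
    intro x
    induction x using TensorProduct.induction_on with
    | zero => simp
    | tmul a b =>
      rw [WHA.ext12_tmul, WHA.ext12_tmul, hΔΘ a, WHA.leg12_def, WHA.leg12_def,
        WHA.assoc_tmul_mul, WHA.assoc_tmul_mul, one_mul, mul_one]
    | add x₁ x₂ h₁ h₂ => rw [map_add, map_add, h₁, h₂, mul_add, add_mul]
  -- intertwining of R with coproduct legs
  have B1 : ∀ X : B ⊗[k] B,
      WHA.ext23 k B (WHA.flipT ∘ₗ W.Δ) X * WHA.leg23 k B R
        = WHA.leg23 k B R * WHA.ext23 k B W.Δ X := by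
    intro X
    induction X using TensorProduct.induction_on with
    | zero => simp
    | tmul a b =>
      rw [WHA.ext23_tmul, WHA.ext23_tmul, WHA.leg23_def,
        Algebra.TensorProduct.tmul_mul_tmul, Algebra.TensorProduct.tmul_mul_tmul,
        one_mul, mul_one, LinearMap.comp_apply, hR5 b]
    | add X₁ X₂ h₁ h₂ => simp only [map_add, add_mul, mul_add, h₁, h₂]
  have B2 : ∀ X : B ⊗[k] B,
      WHA.leg12 k B R * WHA.ext12 k B W.Δ X
        = WHA.ext12 k B (WHA.flipT ∘ₗ W.Δ) X * WHA.leg12 k B R := by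
    intro X
    induction X using TensorProduct.induction_on with
    | zero => simp
    | tmul a b =>
      rw [WHA.ext12_tmul, WHA.ext12_tmul, WHA.leg12_def, WHA.assoc_tmul_mul,
        WHA.assoc_tmul_mul, one_mul, mul_one, LinearMap.comp_apply, hR5 a]
    | add X₁ X₂ h₁ h₂ => simp only [map_add, add_mul, mul_add, h₁, h₂]
  -- permuted cocycle identities
  have P1 : WHA.leg23 k B T.Θbar * WHA.ext23 k B W.Δ (WHA.flipT T.Θbar)
      = WHA.leg13 k B (WHA.flipT T.Θbar)
          * WHA.sw12 (WHA.ext23 k B (WHA.flipT ∘ₗ W.Δ) T.Θbar) := by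
    have h := congrArg (fun z => WHA.sw12 (WHA.sw23 z)) T.cocycle₂
    simp only [WHA.sw23_mul, WHA.sw12_mul, WHA.T1, WHA.T2, WHA.T3, WHA.T4] at h
    exact h
  have P2 : WHA.sw12 (WHA.ext23 k B (WHA.flipT ∘ₗ W.Δ) T.Θbar) * WHA.leg13 k B R
      = WHA.leg13 k B R * WHA.sw12 (WHA.ext23 k B W.Δ T.Θbar) := by
    have h := congrArg (fun z => WHA.sw12 z) (B1 T.Θbar)
    simp only [WHA.sw12_mul, WHA.T5] at h
    exact h
  have P3 : WHA.sw12 (WHA.ext23 k B W.Δ T.Θbar)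
        * WHA.ext12 k B (WHA.flipT ∘ₗ W.Δ) T.Θ
      = WHA.leg13 k B T.Θ * WHA.leg12 k B (WHA.flipT T.Θbar) := by
    have h := congrArg (fun z => WHA.sw12 z) T.cocycle₄
    simp only [WHA.sw12_mul, WHA.T6, WHA.T5, WHA.T7] at h
    exact h
  have P1' : WHA.leg12 k B T.Θbar * WHA.ext12 k B W.Δ (WHA.flipT T.Θbar)
      = WHA.leg13 k B (WHA.flipT T.Θbar)
          * WHA.sw23 (WHA.ext12 k B (WHA.flipT ∘ₗ W.Δ) T.Θbar) := by
    have h := congrArg (fun z => WHA.sw23 (WHA.sw12 z)) T.cocycle₂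
    simp only [WHA.sw12_mul, WHA.sw23_mul, WHA.T7, WHA.T8, WHA.T6, WHA.T5,
      WHA.T9, WHA.U4] at h
    exact h.symm
  have P2' : WHA.sw23 (WHA.ext12 k B (WHA.flipT ∘ₗ W.Δ) T.Θbar) * WHA.leg13 k B R
      = WHA.leg13 k B R * WHA.sw23 (WHA.ext12 k B W.Δ T.Θbar) := by
    have h := congrArg (fun z => WHA.sw23 z) (B2 T.Θbar)
    simp only [WHA.sw23_mul, WHA.T8] at h
    exact h.symm
  have P3' : WHA.sw23 (WHA.ext12 k B W.Δ T.Θbar)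
        * WHA.ext23 k B (WHA.flipT ∘ₗ W.Δ) T.Θ
      = WHA.leg13 k B T.Θ * WHA.leg23 k B (WHA.flipT T.Θbar) := by
    have h := congrArg (fun z => WHA.sw23 z) T.cocycle₃
    simp only [WHA.sw23_mul, WHA.T4, WHA.T8, WHA.T10] at h
    exact h
  refine ⟨?_, ?_, ?_, ?_, ?_, ?_, ?_⟩
  · -- (1)
    show RΘ = WHA.flipT (ΔΘ 1) * RΘ * ΔΘ 1
    rw [hΔΘ1, hRΘ']
    simp only [fmul, mul_assoc]
    rw [WHA.mul_mul_lift' hfee, WHA.mul_mul_lift' T.prod_eq, ← T.idem_left,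
      WHA.mul_mul_lift' heR]
  · -- (2)
    show RbΘ = ΔΘ 1 * RbΘ * WHA.flipT (ΔΘ 1)
    rw [hΔΘ1, hRbΘ']
    simp only [fmul, mul_assoc]
    rw [WHA.mul_mul_lift' T.prod_eq, WHA.mul_mul_lift' hfee,
      WHA.mul_mul_lift' heRb, hk]
  · -- (3)
    show RΘ * RbΘ = WHA.flipT (ΔΘ 1)
    rw [hΔΘ1, hRΘ', hRbΘ']
    simp only [fmul, mul_assoc]
    rw [WHA.mul_mul_lift' T.prod_eq, WHA.mul_mul_lift' heRb,
      WHA.mul_mul_lift' hR3, hk]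
  · -- (4)
    rw [hΔΘ1, hRΘ', hRbΘ']
    simp only [mul_assoc]
    rw [WHA.mul_mul_lift' hfee, WHA.mul_mul_lift' heR,
      WHA.mul_mul_lift' hR₄, ← T.idem_left]
  · -- (5)
    intro h
    show WHA.flipT (ΔΘ h) * RΘ = RΘ * ΔΘ h
    rw [hΔΘ h, hRΘ']
    simp only [fmul, mul_assoc]
    have k2 : WHA.flipT (W.Δ h) * WHA.flipT (W.Δ 1) = WHA.flipT (W.Δ h) := by
      rw [← fmul, hΔe h]
    rw [WHA.mul_mul_lift' hfee, WHA.mul_mul_lift' k2, WHA.mul_mul_lift (hR5 h),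
      WHA.mul_mul_lift' T.prod_eq, WHA.mul_mul_lift' (heΔ h)]
  · -- (6)
    rw [C1 RΘ, hRΘ', WHA.ext23_mul W.Δ W.comul_mul, WHA.ext23_mul W.Δ W.comul_mul,
      hR₆, WHA.leg13_mul, WHA.leg13_mul, WHA.leg12_mul, WHA.leg12_mul]
    simp only [mul_assoc]
    rw [← T.cocycle₁, WHA.mul_mul_lift (B2 T.Θ), WHA.mul_mul_lift P1,
      WHA.mul_mul_lift P2, WHA.mul_mul_lift P3]
  · -- (7)
    rw [C2 RΘ, hRΘ', WHA.ext12_mul W.Δ W.comul_mul, WHA.ext12_mul W.Δ W.comul_mul,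
      hR₇, WHA.leg13_mul, WHA.leg13_mul, WHA.leg23_mul, WHA.leg23_mul]
    simp only [mul_assoc]
    rw [T.cocycle₁, ← WHA.mul_mul_lift (B1 T.Θ), WHA.mul_mul_lift P1',
      WHA.mul_mul_lift P2', WHA.mul_mul_lift P3']
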